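/- Assume the Axiom of Choice. Then for every infinite set S, the quasi-club filter μ_S equals the club filter on [S]^ω, i.e., A ∈ μ_S if and only if A contains a set C ⊆ [S]^ω that is cofinal (for every σ ∈ [S]^ω there is τ ∈ C with σ ⊆ τ) and closed under unions of ⊆-increasing ω-chains. -/

import Mathlib

open Set

universe u

/-- The collection `[S]^ω` of countable subsets of `S`. -/
abbrev Cw (S : Type u) := {σ : Set S // σ.Countable}

/-- Dependent choice for the set `S`. -/
def DCax (S : Type u) : Prop :=
  ∀ R : S → S → Prop, (∀ x, ∃ y, R x y) →
    ∀ x : S, ∃ f : ℕ → S, f 0 = x ∧ ∀ n, R (f n) (f (n + 1))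

/-- `F` is a filter on `[S]^ω`: contains everything, upward closed, closed under
binary intersections. -/
def IsSetFilter (S : Type u) (F : Set (Set (Cw S))) : Prop :=
  Set.univ ∈ F ∧ (∀ A B : Set (Cw S), A ∈ F → A ⊆ B → B ∈ F) ∧
    (∀ A B : Set (Cw S), A ∈ F → B ∈ F → A ∩ B ∈ F)

/-- `F` is fine. -/
def IsFine (S : Type u) (F : Set (Set (Cw S))) : Prop :=
  ∀ τ : Cw S, {σ : Cw S | τ.1 ⊆ σ.1} ∈ F

/-- `F` has the diagonal intersection property. -/
def HasDiagInter (S : Type u) (F : Set (Set (Cw S))) : Prop :=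
  ∀ B : S → Set (Cw S), (∀ a : S, B a ∈ F) →
    {σ : Cw S | ∀ a ∈ σ.1, σ ∈ B a} ∈ F

/-- `F` is normal: every regressive-like assignment on an `F`-positive set is
constant-containing on an `F`-positive set. -/
def IsNormalFilter (S : Type u) (F : Set (Set (Cw S))) : Prop :=
  ∀ A : Set (Cw S), Aᶜ ∉ F →
    ∀ G : Cw S → Cw S, (∀ σ ∈ A, (G σ).1.Nonempty ∧ (G σ).1 ⊆ σ.1) →
      ∃ a : S, {σ : Cw S | σ ∈ A ∧ a ∈ (G σ).1}ᶜ ∉ F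

/-- A supercompactness measure on `[S]^ω`: a (proper) normal fine ultrafilter. -/
def IsSCMeasure (S : Type u) (F : Set (Set (Cw S))) : Prop :=
  IsSetFilter S F ∧ ∅ ∉ F ∧ IsFine S F ∧ HasDiagInter S F ∧
    ∀ A : Set (Cw S), A ∈ F ∨ Aᶜ ∈ F

/-- A quasi-strategy for Player II (who moves at odd-length-so-far positions,
i.e. positions of odd length are II's turn... here: II moves when the current
position has odd length). -/
def IsQStratII (S : Type u) (T : Set (List S)) : Prop :=
  [] ∈ T ∧ (∀ p ∈ T, Even p.length → ∀ a : S, p ++ [a] ∈ T) ∧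
    (∀ p ∈ T, ¬ Even p.length → ∃ b : S, p ++ [b] ∈ T)

/-- A quasi-strategy for Player I. -/
def IsQStratI (S : Type u) (T : Set (List S)) : Prop :=
  [] ∈ T ∧ (∀ p ∈ T, ¬ Even p.length → ∀ b : S, p ++ [b] ∈ T) ∧
    (∀ p ∈ T, Even p.length → ∃ a : S, p ++ [a] ∈ T)

/-- The infinite play `f` is consistent with the tree `T`. -/
def PlayThrough (S : Type u) (T : Set (List S)) (f : ℕ → S) : Prop :=
  ∀ n : ℕ, (List.ofFn fun i : Fin n => f i) ∈ T

/-- The countable set of all elements played in the play `f`. -/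
def playSet (S : Type u) (f : ℕ → S) : Cw S :=
  ⟨Set.range f, Set.countable_range f⟩

/-- `T` is a winning quasi-strategy for Player II in the club game on `S` with payoff `A`. -/
def WinsClubII (S : Type u) (T : Set (List S)) (A : Set (Cw S)) : Prop :=
  IsQStratII S T ∧ ∀ f : ℕ → S, PlayThrough S T f → playSet S f ∈ A

/-- `T` is a winning quasi-strategy for Player I in the club game on `S` with payoff `A`
(for Player II). -/
def WinsClubI (S : Type u) (T : Set (List S)) (A : Set (Cw S)) : Prop :=
  IsQStratI S T ∧ ∀ f : ℕ → S, PlayThrough S T f → playSet S f ∉ A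

/-- The quasi-club filter `μ_S`. -/
def qclub (S : Type u) : Set (Set (Cw S)) :=
  {A | ∃ T : Set (List S), WinsClubII S T A}

/-- Winning quasi-strategy for Player II in the length-ω game on `S` with payoff `A ⊆ S^ω`. -/
def WinsGameQSII (S : Type u) (T : Set (List S)) (A : Set (ℕ → S)) : Prop :=
  IsQStratII S T ∧ ∀ f : ℕ → S, PlayThrough S T f → f ∈ A

/-- Winning quasi-strategy for Player I in the length-ω game on `S` with payoff `A ⊆ S^ω`
(for Player II). -/
def WinsGameQSI (S : Type u) (T : Set (List S)) (A : Set (ℕ → S)) : Prop :=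
  IsQStratI S T ∧ ∀ f : ℕ → S, PlayThrough S T f → f ∉ A

/-- The play `f` follows the strategy `s` for Player I (who moves at even rounds). -/
def StratFollowsI (S : Type u) (s : List S → S) (f : ℕ → S) : Prop :=
  ∀ n : ℕ, Even n → f n = s (List.ofFn fun i : Fin n => f i)

/-- The play `f` follows the strategy `s` for Player II (who moves at odd rounds). -/
def StratFollowsII (S : Type u) (s : List S → S) (f : ℕ → S) : Prop :=
  ∀ n : ℕ, ¬ Even n → f n = s (List.ofFn fun i : Fin n => f i)

/-- `AD_ℝ`: every length-ω two-player game with moves from `ℝ` is determined. -/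
def ADReal : Prop :=
  ∀ A : Set (ℕ → ℝ),
    (∃ s : List ℝ → ℝ, ∀ f : ℕ → ℝ, StratFollowsI ℝ s f → f ∉ A) ∨
    (∃ s : List ℝ → ℝ, ∀ f : ℕ → ℝ, StratFollowsII ℝ s f → f ∈ A)

section Aux
variable {S : Type u} [Infinite S]

noncomputable def sZero (S : Type u) [Infinite S] : S := Classical.arbitrary S

open Classical in
noncomputable def enumOf (σ : Cw S) : ℕ → S :=
  if h : σ.1.Nonempty then (σ.2.exists_eq_range h).choose else fun _ => sZero S

open Classical in
lemma enumOf_spec (σ : Cw S) (h : σ.1.Nonempty) : σ.1 = Set.range (enumOf σ) := by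
  rw [enumOf, dif_pos h]; exact (σ.2.exists_eq_range h).choose_spec

lemma ofFn_snoc (f : ℕ → S) (m : ℕ) :
    (List.ofFn fun i : Fin (m+1) => f i) = (List.ofFn fun i : Fin m => f i) ++ [f m] := by
  rw [List.ofFn_succ']
  simp [List.concat_eq_append, Fin.last]

lemma take_ofFn_agree (f : ℕ → S) {m n : ℕ} (h : m ≤ n) :
    (List.ofFn fun i : Fin n => f i).take m = List.ofFn fun i : Fin m => f i := by
  apply List.ext_getElem
  · simp [h]
  · intro i h1 h2
    rw [List.getElem_take, List.getElem_ofFn, List.getElem_ofFn]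

/-- all members of finite list in some member of monotone chain -/
lemma list_exists_chain {Y : ℕ → Set S} (hmono : ∀ m n, m ≤ n → Y m ⊆ Y n)
    (p : List S) (h : ∀ a ∈ p, ∃ n, a ∈ Y n) : ∃ n, ∀ a ∈ p, a ∈ Y n := by
  induction p with
  | nil => exact ⟨0, by simp⟩
  | cons a q ih =>
    obtain ⟨n, hn⟩ := ih (fun x hx => h x (List.mem_cons_of_mem _ hx))
    obtain ⟨m, hm⟩ := h a List.mem_cons_self
    refine ⟨max m n, fun x hx => ?_⟩
    rcases List.mem_cons.1 hx with rfl | hx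
    · exact hmono m _ (le_max_left _ _) hm
    · exact hmono n _ (le_max_right _ _) (hn x hx)

lemma countable_listsIn (τ : Set S) (hτ : τ.Countable) :
    {p : List S | ∀ a ∈ p, a ∈ τ}.Countable := by
  have : Countable ↥τ := hτ.to_subtype
  have : {p : List S | ∀ a ∈ p, a ∈ τ} ⊆ Set.range (fun l : List ↥τ => l.map Subtype.val) := by
    intro p hp
    refine ⟨p.attach.map fun x => ⟨x.1, hp x.1 x.2⟩, ?_⟩
    simp [List.map_map, Function.comp]
  exact (Set.countable_range _).mono this

/-! ### Direction mp: from a quasi-strategy to a club -/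

open Classical in
noncomputable def respOf (T : Set (List S)) : List S → S := fun p =>
  if h : ∃ b, p ++ [b] ∈ T then h.choose else sZero S

open Classical in
lemma respOf_spec {T : Set (List S)} (hT : IsQStratII S T) {p : List S}
    (hp : p ∈ T) (ho : ¬ Even p.length) : p ++ [respOf T p] ∈ T := by
  have h : ∃ b, p ++ [b] ∈ T := hT.2.2 p hp ho
  rw [respOf, dif_pos h]; exact h.choose_spec

def GoodSet (T : Set (List S)) : Set (Cw S) :=
  {σ | σ.1.Nonempty ∧ ∀ p ∈ T, (∀ a ∈ p, a ∈ σ.1) → ¬ Even p.length →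
      ∃ b ∈ σ.1, p ++ [b] ∈ T}

open Classical in
noncomputable def respIn (T : Set (List S)) (σ : Cw S) : List S → S := fun p =>
  if h : ∃ b ∈ σ.1, p ++ [b] ∈ T then h.choose else sZero S

open Classical in
lemma respIn_spec {T : Set (List S)} {σ : Cw S} {p : List S}
    (h : ∃ b ∈ σ.1, p ++ [b] ∈ T) :
    respIn T σ p ∈ σ.1 ∧ p ++ [respIn T σ p] ∈ T := by
  rw [respIn, dif_pos h]; exact ⟨h.choose_spec.1, h.choose_spec.2⟩

noncomputable def goodMove (T : Set (List S)) (σ : Cw S) (n : ℕ) (p : List S) : S :=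
  if Even n then enumOf σ (n/2) else respIn T σ p

noncomputable def playL (T : Set (List S)) (σ : Cw S) : ℕ → List S
  | 0 => []
  | n+1 => playL T σ n ++ [goodMove T σ n (playL T σ n)]

lemma playL_length (T : Set (List S)) (σ : Cw S) (n : ℕ) : (playL T σ n).length = n := by
  induction n with
  | zero => rfl
  | succ n ih => simp [playL, ih]

/-- the play function for `GoodSet ⊆ A` -/
noncomputable def playF (T : Set (List S)) (σ : Cw S) (n : ℕ) : S :=
  goodMove T σ n (playL T σ n)

lemma playL_eq_ofFn (T : Set (List S)) (σ : Cw S) (n : ℕ) :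
    playL T σ n = List.ofFn fun i : Fin n => playF T σ i := by
  induction n with
  | zero => rfl
  | succ n ih => rw [ofFn_snoc, ← ih]; rfl

lemma playL_good {T : Set (List S)} (hT : IsQStratII S T) {σ : Cw S}
    (hσ : σ ∈ GoodSet T) (n : ℕ) :
    playL T σ n ∈ T ∧ ∀ a ∈ playL T σ n, a ∈ σ.1 := by
  induction n with
  | zero => exact ⟨hT.1, by simp [playL]⟩
  | succ n ih =>
    have hlen := playL_length T σ n
    by_cases he : Even n
    · have hmem : goodMove T σ n (playL T σ n) = enumOf σ (n/2) := if_pos he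
      constructor
      · show playL T σ n ++ _ ∈ T
        exact hT.2.1 _ ih.1 (by rw [hlen]; exact he) _
      · intro a ha
        rcases List.mem_append.1 ha with h | h
        · exact ih.2 a h
        · rw [List.mem_singleton.1 h, hmem, enumOf_spec σ hσ.1]
          exact ⟨n/2, rfl⟩
    · have hex : ∃ b ∈ σ.1, playL T σ n ++ [b] ∈ T :=
        hσ.2 _ ih.1 ih.2 (by rw [hlen]; exact he)
      have hmem : goodMove T σ n (playL T σ n) = respIn T σ (playL T σ n) := if_neg he
      constructor
      · show playL T σ n ++ _ ∈ T
        rw [hmem]; exact (respIn_spec hex).2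
      · intro a ha
        rcases List.mem_append.1 ha with h | h
        · exact ih.2 a h
        · rw [List.mem_singleton.1 h, hmem]; exact (respIn_spec hex).1

/-- hull construction: cofinality of GoodSet -/
noncomputable def hullSeq (T : Set (List S)) (σ : Cw S) : ℕ → Cw S
  | 0 => ⟨insert (sZero S) σ.1, σ.2.insert _⟩
  | n+1 => ⟨(hullSeq T σ n).1 ∪ respOf T '' {p | ∀ a ∈ p, a ∈ (hullSeq T σ n).1},
      (hullSeq T σ n).2.union ((countable_listsIn _ (hullSeq T σ n).2).image _)⟩

lemma hullSeq_mono (T : Set (List S)) (σ : Cw S) {m n : ℕ} (h : m ≤ n) :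
    (hullSeq T σ m).1 ⊆ (hullSeq T σ n).1 := by
  induction n with
  | zero => rw [Nat.le_zero.1 h]
  | succ n ih =>
    rcases Nat.le_succ_iff.1 h with h' | h'
    · exact (ih h').trans Set.subset_union_left
    · rw [h']

noncomputable def hullOf (T : Set (List S)) (σ : Cw S) : Cw S :=
  ⟨⋃ n, (hullSeq T σ n).1, Set.countable_iUnion fun n => (hullSeq T σ n).2⟩

lemma hullOf_good {T : Set (List S)} (hT : IsQStratII S T) (σ : Cw S) :
    hullOf T σ ∈ GoodSet T ∧ σ.1 ⊆ (hullOf T σ).1 := by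
  have hsub : ∀ n, (hullSeq T σ n).1 ⊆ (hullOf T σ).1 :=
    fun n => Set.subset_iUnion (fun n => (hullSeq T σ n).1) n
  refine ⟨⟨⟨sZero S, hsub 0 (Set.mem_insert _ _)⟩, ?_⟩, ?_⟩
  · intro p hp hmem ho
    obtain ⟨n, hn⟩ := list_exists_chain (fun m n h => hullSeq_mono T σ h) p
      (fun a ha => Set.mem_iUnion.1 (hmem a ha))
    refine ⟨respOf T p, hsub (n+1) (Set.mem_union_right _ ⟨p, hn, rfl⟩), respOf_spec hT hp ho⟩
  · exact fun a ha => hsub 0 (Set.mem_insert_of_mem _ ha)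

lemma goodSet_chain_closed {T : Set (List S)} (g : ℕ → Cw S)
    (hg : ∀ n, g n ∈ GoodSet T) (hmono : ∀ n, (g n).1 ⊆ (g (n+1)).1) :
    (⟨⋃ n, (g n).1, Set.countable_iUnion fun n => (g n).2⟩ : Cw S) ∈ GoodSet T := by
  have hmono' : ∀ m n, m ≤ n → (g m).1 ⊆ (g n).1 := by
    intro m n h
    induction n with
    | zero => rw [Nat.le_zero.1 h]
    | succ n ih =>
      rcases Nat.le_succ_iff.1 h with h' | h'
      · exact (ih h').trans (hmono n)
      · rw [h']
  refine ⟨⟨(hg 0).1.choose, Set.mem_iUnion.2 ⟨0, (hg 0).1.choose_spec⟩⟩, ?_⟩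
  intro p hp hmem ho
  obtain ⟨n, hn⟩ := list_exists_chain hmono' p (fun a ha => Set.mem_iUnion.1 (hmem a ha))
  obtain ⟨b, hb, hbT⟩ := (hg n).2 p hp hn ho
  exact ⟨b, Set.mem_iUnion.2 ⟨n, hb⟩, hbT⟩

lemma goodSet_sub_win {T : Set (List S)} {A : Set (Cw S)} (hT : IsQStratII S T)
    (hwin : ∀ f : ℕ → S, PlayThrough S T f → (⟨Set.range f, Set.countable_range f⟩ : Cw S) ∈ A) :
    GoodSet T ⊆ A := by
  intro σ hσ
  have hplay : PlayThrough S T (playF T σ) := by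
    intro n
    rw [← playL_eq_ofFn]
    exact (playL_good hT hσ n).1
  have hr : Set.range (playF T σ) = σ.1 := by
    apply Set.Subset.antisymm
    · rintro _ ⟨n, rfl⟩
      have := (playL_good hT hσ (n+1)).2
      apply this
      show playF T σ n ∈ playL T σ n ++ [goodMove T σ n (playL T σ n)]
      exact List.mem_append.2 (Or.inr (List.mem_singleton.2 rfl))
    · intro x hx
      rw [enumOf_spec σ hσ.1] at hx
      obtain ⟨k, rfl⟩ := hx
      refine ⟨2*k, ?_⟩
      show goodMove T σ (2*k) _ = _
      rw [goodMove, if_pos ⟨k, (two_mul k).symm ▸ rfl⟩]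
      congr 1
      omega
  have := hwin _ hplay
  convert this using 2
  exact hr.symm

/-! ### Direction mpr: from a club to a quasi-strategy -/

noncomputable def bigOf {C : Set (Cw S)} (hcof : ∀ σ : Cw S, ∃ τ ∈ C, σ.1 ⊆ τ.1)
    (σ : Cw S) : Cw S := (hcof σ).choose

lemma bigOf_mem {C : Set (Cw S)} (hcof : ∀ σ : Cw S, ∃ τ ∈ C, σ.1 ⊆ τ.1) (σ : Cw S) :
    bigOf hcof σ ∈ C := (hcof σ).choose_spec.1

lemma bigOf_sub {C : Set (Cw S)} (hcof : ∀ σ : Cw S, ∃ τ ∈ C, σ.1 ⊆ τ.1) (σ : Cw S) :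
    σ.1 ⊆ (bigOf hcof σ).1 := (hcof σ).choose_spec.2

noncomputable def tauF {C : Set (Cw S)} (hcof : ∀ σ : Cw S, ∃ τ ∈ C, σ.1 ⊆ τ.1)
    (f : ℕ → S) : ℕ → Cw S
  | 0 => bigOf hcof ⟨{sZero S}, Set.countable_singleton _⟩
  | n+1 => bigOf hcof ⟨(tauF hcof f n).1 ∪ f '' {i | i < 2*(n+1)},
      (tauF hcof f n).2.union (((Set.finite_Iio _).image f).countable)⟩

variable {C : Set (Cw S)} (hcof : ∀ σ : Cw S, ∃ τ ∈ C, σ.1 ⊆ τ.1)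

lemma tauF_mem (f : ℕ → S) (n : ℕ) : tauF hcof f n ∈ C := by
  cases n <;> exact bigOf_mem hcof _

lemma tauF_mono (f : ℕ → S) (n : ℕ) : (tauF hcof f n).1 ⊆ (tauF hcof f (n+1)).1 :=
  fun x hx => bigOf_sub hcof _ (Set.mem_union_left _ hx)

lemma tauF_nonempty (f : ℕ → S) (n : ℕ) : sZero S ∈ (tauF hcof f n).1 := by
  induction n with
  | zero => exact bigOf_sub hcof _ rfl
  | succ n ih => exact tauF_mono hcof f n ih

lemma tauF_covers (f : ℕ → S) {i n : ℕ} (h : i < 2*n) : f i ∈ (tauF hcof f n).1 := by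
  cases n with
  | zero => omega
  | succ n => exact bigOf_sub hcof _ (Set.mem_union_right _ ⟨i, h, rfl⟩)

lemma tauF_stable {f h : ℕ → S} {n : ℕ} (hfh : ∀ i, i < 2*n → f i = h i) :
    tauF hcof f n = tauF hcof h n := by
  induction n with
  | zero => rfl
  | succ n ih =>
    have h1 : tauF hcof f n = tauF hcof h n := ih (fun i hi => hfh i (by omega))
    show bigOf hcof _ = bigOf hcof _
    congr 1
    refine Subtype.ext ?_
    show (tauF hcof f n).1 ∪ f '' {i | i < 2*(n+1)} = (tauF hcof h n).1 ∪ h '' {i | i < 2*(n+1)}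
    rw [h1]
    congr 1
    exact Set.image_congr fun i hi => hfh i hi

noncomputable def stratII : List S → S := fun p =>
  enumOf (tauF hcof (fun i => p.getD i (sZero S)) (Nat.unpair (p.length / 2)).1)
    (Nat.unpair (p.length / 2)).2

def stratTree (s : List S → S) : Set (List S) :=
  {p | ∀ i, (h : i < p.length) → ¬ Even i → p[i] = s (p.take i)}

lemma stratTree_isQII (s : List S → S) : IsQStratII S (stratTree s) := by
  refine ⟨fun i h => by simp at h, ?_, ?_⟩
  · intro p hp he a i hi ho
    have hlen : (p ++ [a]).length = p.length + 1 := by simp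
    rcases Nat.lt_succ_iff_lt_or_eq.1 (hlen ▸ hi) with h' | h'
    · rw [List.getElem_append_left h', List.take_append_of_le_length (Nat.le_of_lt h')]
      exact hp i h' ho
    · exact absurd (h' ▸ he) ho
  · intro p hp ho
    refine ⟨s p, fun i hi hio => ?_⟩
    have hlen : (p ++ [s p]).length = p.length + 1 := by simp
    rcases Nat.lt_succ_iff_lt_or_eq.1 (hlen ▸ hi) with h' | h'
    · rw [List.getElem_append_left h', List.take_append_of_le_length (Nat.le_of_lt h')]
      exact hp i h' hio
    · subst h'
      rw [List.take_append_of_le_length le_rfl, List.take_length]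
      simp

lemma stratTree_follows {s : List S → S} {f : ℕ → S}
    (hf : PlayThrough S (stratTree s) f) {m : ℕ} (hm : ¬ Even m) :
    f m = s (List.ofFn fun i : Fin m => f i) := by
  have := hf (m+1) m (by simp) hm
  rw [List.getElem_ofFn] at this
  rw [take_ofFn_agree f (Nat.le_succ m)] at this
  exact this

lemma stratII_wins {f : ℕ → S}
    (hf : PlayThrough S (stratTree (stratII hcof)) f) :
    Set.range f = ⋃ n, (tauF hcof f n).1 := by
  apply Set.Subset.antisymm
  · rintro _ ⟨m, rfl⟩
    exact Set.mem_iUnion.2 ⟨m+1, tauF_covers hcof f (by omega)⟩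
  · intro x hx
    obtain ⟨i, hxi⟩ := Set.mem_iUnion.1 hx
    have hne : (tauF hcof f i).1.Nonempty := ⟨sZero S, tauF_nonempty hcof f i⟩
    rw [enumOf_spec _ hne] at hxi
    obtain ⟨j, rfl⟩ := hxi
    set k := Nat.pair i j with hk
    have hik : i ≤ k := Nat.left_le_pair i j
    have hm : ¬ Even (2*k+1) := by simp [Nat.even_add_one, parity_simps]
    have hfollow := stratTree_follows hf hm
    set p : List S := List.ofFn fun t : Fin (2*k+1) => f t with hp
    have hlen : p.length = 2*k+1 := by simp [hp]
    have hdiv : p.length / 2 = k := by omega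
    have hpad : ∀ t, t < 2*i → (fun t => p.getD t (sZero S)) t = f t := by
      intro t ht
      have htlt : t < p.length := by omega
      show p.getD t (sZero S) = f t
      rw [List.getD_eq_getElem p _ htlt]
      exact List.getElem_ofFn (by simpa [hp] using htlt)
    have hstable : tauF hcof (fun t => p.getD t (sZero S)) i = tauF hcof f i :=
      tauF_stable hcof hpad
    have : f (2*k+1) = enumOf (tauF hcof f i) j := by
      rw [hfollow]
      show stratII hcof p = _
      rw [stratII, hdiv, Nat.unpair_pair, hstable]
    exact ⟨2*k+1, this⟩

end Aux

/-- under AC, the quasi-club filter is the club filter on `[S]^ω`. -/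
theorem qclub_eq_club_filter (S : Type u) [Infinite S] :
    ∀ A : Set (Cw S),
      A ∈ qclub S ↔
        ∃ C : Set (Cw S), C ⊆ A ∧
          (∀ σ : Cw S, ∃ τ ∈ C, σ.1 ⊆ τ.1) ∧
          (∀ g : ℕ → Cw S, (∀ n, g n ∈ C) → (∀ n, (g n).1 ⊆ (g (n + 1)).1) →
            (⟨⋃ n, (g n).1, Set.countable_iUnion fun n => (g n).2⟩ : Cw S) ∈ C) := by
  intro A
  constructor
  · rintro ⟨T, hT, hwin⟩
    refine ⟨GoodSet T, goodSet_sub_win hT hwin, ?_, ?_⟩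
    · intro σ
      obtain ⟨hg, hs⟩ := hullOf_good hT σ
      exact ⟨hullOf T σ, hg, hs⟩
    · intro g hg hmono
      exact goodSet_chain_closed g hg hmono
  · rintro ⟨C, hCA, hcof, hclosed⟩
    refine ⟨stratTree (stratII hcof), stratTree_isQII _, ?_⟩
    intro f hf
    have hr := stratII_wins hcof hf
    have hmem : (⟨⋃ n, (tauF hcof f n).1,
        Set.countable_iUnion fun n => (tauF hcof f n).2⟩ : Cw S) ∈ C :=
      hclosed (tauF hcof f) (tauF_mem hcof f) (tauF_mono hcof f)
    have heq : playSet S f = ⟨⋃ n, (tauF hcof f n).1,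
        Set.countable_iUnion fun n => (tauF hcof f n).2⟩ := Subtype.ext hr
    rw [heq]
    exact hCA hmem
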